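/- Let n ≥ 4 and let B be an n×n real symmetric matrix with B_{ii} = 1 for all i and −1 ≤ B_{ij} ≤ 0 for all i ≠ j. If B is irreducible, i.e. the index set {1,…,n} admits no partition into two nonempty sets I and J with B_{ij} = 0 for all i ∈ I and j ∈ J, then there exists a 3-dimensional linear subspace of ℝⁿ on which the bilinear form (x, y) ↦ xᵀBy is positive definite (i.e. p(B) ≥ 3). -/

import Mathlib

open Matrix

section Aux

variable {n : ℕ} {B : Matrix (Fin n) (Fin n) ℝ}

/-- The eigenvector basis, as plain functions. -/
private noncomputable def auxV (hB : B.IsHermitian) : Fin n → (Fin n → ℝ) :=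
  fun i => ⇑(hB.eigenvectorBasis i)

variable (hB : B.IsHermitian)

private lemma aux_dot_eigen (i j : Fin n) :
    auxV hB i ⬝ᵥ auxV hB j = if i = j then 1 else 0 := by
  have h := hB.eigenvectorBasis.orthonormal
  rw [orthonormal_iff_ite] at h
  have := h i j
  rw [PiLp.inner_apply] at this
  simpa [auxV, dotProduct, mul_comm] using this

private lemma aux_expand (x : Fin n → ℝ) :
    ∑ i, (auxV hB i ⬝ᵥ x) • auxV hB i = x := by
  have h := hB.eigenvectorBasis.sum_repr' ((WithLp.equiv 2 (Fin n → ℝ)).symm x)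
  have h2 : ∀ i : Fin n,
      (inner ℝ (hB.eigenvectorBasis i) ((WithLp.equiv 2 (Fin n → ℝ)).symm x) : ℝ)
        = auxV hB i ⬝ᵥ x := by
    intro i
    rw [PiLp.inner_apply]
    simp only [RCLike.inner_apply, starRingEnd_apply, star_trivial, dotProduct]
    exact Finset.sum_congr rfl fun k _ => mul_comm _ _
  calc ∑ i, (auxV hB i ⬝ᵥ x) • auxV hB i
      = WithLp.equiv 2 (Fin n → ℝ) (∑ i, (inner ℝ (hB.eigenvectorBasis i)
          ((WithLp.equiv 2 (Fin n → ℝ)).symm x) : ℝ) • hB.eigenvectorBasis i) := by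
        simp only [h2]; rw [WithLp.equiv_apply, WithLp.ofLp_sum]; rfl
    _ = x := by rw [h]; rfl

private lemma aux_trace : ∑ i, B i i = ∑ i, hB.eigenvalues i := by
  have : B.trace = ∑ i, hB.eigenvalues i := by
    conv_lhs => rw [hB.spectral_theorem, Unitary.conjStarAlgAut_apply]
    rw [Matrix.trace_mul_cycle]
    rw [show (star (hB.eigenvectorUnitary : Matrix (Fin n) (Fin n) ℝ)) * hB.eigenvectorUnitary = 1
      from Matrix.mem_unitaryGroup_iff'.mp hB.eigenvectorUnitary.2]
    simp [Matrix.trace_diagonal]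
  simpa [Matrix.trace, Matrix.diag] using this

private lemma aux_trace_sq : ∑ i, ∑ j, B i j * B j i = ∑ i, hB.eigenvalues i ^ 2 := by
  have main : (B * B).trace = ∑ i, hB.eigenvalues i ^ 2 := by
    set U : Matrix (Fin n) (Fin n) ℝ := (hB.eigenvectorUnitary : Matrix (Fin n) (Fin n) ℝ)
      with hUdef
    set D : Matrix (Fin n) (Fin n) ℝ := diagonal (RCLike.ofReal ∘ hB.eigenvalues) with hD
    have hU : star U * U = 1 := Matrix.mem_unitaryGroup_iff'.mp hB.eigenvectorUnitary.2
    have key : B * B = U * (D * D) * star U := by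
      conv_lhs => rw [hB.spectral_theorem, Unitary.conjStarAlgAut_apply]
      calc (U*D*star U)*(U*D*star U) = U*D*(star U*(U*(D*star U))) := by simp only [mul_assoc]
      _ = U*D*(D*star U) := by rw [← mul_assoc (star U) U, hU, one_mul]
      _ = U*(D*D)*star U := by simp only [mul_assoc]
    rw [key, Matrix.trace_mul_cycle, ← mul_assoc, hU, one_mul, hD, diagonal_mul_diagonal]
    simp [Matrix.trace_diagonal, sq]
  rw [← main]
  simp [Matrix.trace, Matrix.diag, Matrix.mul_apply]

private lemma aux_dot_sum_sum (S : Finset (Fin n)) (d e : Fin n → ℝ) :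
    (∑ i ∈ S, d i • auxV hB i) ⬝ᵥ (∑ j ∈ S, e j • auxV hB j) = ∑ i ∈ S, d i * e i := by
  classical
  calc (∑ i ∈ S, d i • auxV hB i) ⬝ᵥ (∑ j ∈ S, e j • auxV hB j)
      = ∑ k, (∑ i ∈ S, d i * auxV hB i k) * (∑ j ∈ S, e j * auxV hB j k) := by
        simp [dotProduct, Finset.sum_apply]
    _ = ∑ k, ∑ i ∈ S, ∑ j ∈ S, (d i * auxV hB i k) * (e j * auxV hB j k) := by
        refine Finset.sum_congr rfl fun k _ => ?_
        rw [Finset.sum_mul_sum]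
    _ = ∑ i ∈ S, ∑ j ∈ S, ∑ k, (d i * auxV hB i k) * (e j * auxV hB j k) := by
        rw [Finset.sum_comm]
        exact Finset.sum_congr rfl fun i _ => Finset.sum_comm
    _ = ∑ i ∈ S, ∑ j ∈ S, (d i * e j) * (auxV hB i ⬝ᵥ auxV hB j) := by
        refine Finset.sum_congr rfl fun i _ => Finset.sum_congr rfl fun j _ => ?_
        rw [dotProduct, Finset.mul_sum]
        exact Finset.sum_congr rfl fun k _ => by ring
    _ = ∑ i ∈ S, d i * e i := by
        refine Finset.sum_congr rfl fun i hi => ?_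
        rw [Finset.sum_congr rfl fun j (_ : j ∈ S) => by rw [aux_dot_eigen hB i j]]
        simp only [mul_ite, mul_one, mul_zero]
        rw [Finset.sum_ite_eq S i fun j => d i * e j]
        simp [hi]

private lemma aux_mulVec_sum (S : Finset (Fin n)) (d : Fin n → ℝ) :
    B *ᵥ (∑ i ∈ S, d i • auxV hB i)
      = ∑ i ∈ S, (hB.eigenvalues i * d i) • auxV hB i := by
  rw [show B *ᵥ (∑ i ∈ S, d i • auxV hB i) = ∑ i ∈ S, d i • (B *ᵥ auxV hB i) from by
    rw [← Matrix.mulVecLin_apply, map_sum]; simp [Matrix.mulVecLin_apply, Matrix.mulVec_smul]]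
  refine Finset.sum_congr rfl fun i _ => ?_
  unfold auxV
  rw [hB.mulVec_eigenvectorBasis, smul_smul, mul_comm]

/-- Quadratic form in eigencoordinates. -/
private lemma aux_quadform (x : Fin n → ℝ) :
    x ⬝ᵥ (B *ᵥ x) = ∑ i, hB.eigenvalues i * (auxV hB i ⬝ᵥ x) ^ 2 := by
  conv_lhs => rw [← aux_expand hB x]
  rw [aux_mulVec_sum hB]
  rw [show (∑ i, (auxV hB i ⬝ᵥ x) • auxV hB i) ⬝ᵥ
      (∑ i, (hB.eigenvalues i * (auxV hB i ⬝ᵥ x)) • auxV hB i)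
      = ∑ i, (auxV hB i ⬝ᵥ x) * (hB.eigenvalues i * (auxV hB i ⬝ᵥ x)) from
    aux_dot_sum_sum hB Finset.univ _ _]
  exact Finset.sum_congr rfl fun i _ => by ring

private lemma aux_normsq (x : Fin n → ℝ) :
    x ⬝ᵥ x = ∑ i, (auxV hB i ⬝ᵥ x) ^ 2 := by
  conv_lhs => rw [← aux_expand hB x]
  rw [aux_dot_sum_sum hB Finset.univ]
  exact Finset.sum_congr rfl fun i _ => by ring

/-- Rayleigh-type bound. -/
private lemma aux_rayleigh (x : Fin n → ℝ) (m : ℝ) (hm : ∀ i, m ≤ hB.eigenvalues i) :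
    m * (x ⬝ᵥ x) ≤ x ⬝ᵥ (B *ᵥ x) := by
  rw [aux_quadform hB, aux_normsq hB, Finset.mul_sum]
  refine Finset.sum_le_sum fun i _ => ?_
  have := sq_nonneg (auxV hB i ⬝ᵥ x)
  nlinarith [hm i]

end Aux

/-- A real matrix indexed by `ι` is irreducible if the index set admits no partition
into two nonempty sets `I`, `J` with `B i j = 0` for all `i ∈ I`, `j ∈ J`. -/
def Matrix.IsIrreducibleMatrix {ι : Type*} (B : Matrix ι ι ℝ) : Prop :=
  ¬ ∃ I J : Set ι, I.Nonempty ∧ J.Nonempty ∧ (∀ i, i ∈ I ∨ i ∈ J) ∧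
      (∀ i, ¬ (i ∈ I ∧ i ∈ J)) ∧ ∀ i ∈ I, ∀ j ∈ J, B i j = 0


private lemma aux_combin {n : ℕ} (hn4 : n = 4) {B : Matrix (Fin n) (Fin n) ℝ}
    (hsymm : B.IsSymm) (hdiag : ∀ i, B i i = 1)
    (h01 : ∀ i j : Fin n, i ≠ j → B i j = 0 ∨ B i j = -1)
    (hSB : ∑ i, ∑ j, B i j = 0) :
    ∃ I J : Set (Fin n), I.Nonempty ∧ J.Nonempty ∧ (∀ i, i ∈ I ∨ i ∈ J) ∧
      (∀ i, ¬ (i ∈ I ∧ i ∈ J)) ∧ ∀ i ∈ I, ∀ j ∈ J, B i j = 0 := by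
  classical
  set D : Fin n → ℝ := fun i => ∑ j ∈ Finset.univ.erase i, (- B i j) with hD
  have hval : ∀ i j : Fin n, j ≠ i → - B i j = 0 ∨ - B i j = 1 := by
    intro i j hji
    rcases h01 i j (Ne.symm hji) with h | h
    · exact Or.inl (by rw [h]; ring)
    · exact Or.inr (by rw [h]; ring)
  have hvnn : ∀ i j : Fin n, j ≠ i → 0 ≤ - B i j := by
    intro i j hji
    rcases hval i j hji with h | h <;> rw [h] <;> norm_num
  have hDnn : ∀ i, 0 ≤ D i := by
    intro i
    apply Finset.sum_nonneg
    intro j hj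
    exact hvnn i j (Finset.mem_erase.mp hj).1
  have hDsum : ∑ i, D i = 4 := by
    have hrow : ∀ i : Fin n, D i = 1 - ∑ j, B i j := by
      intro i
      have h : B i i + ∑ j ∈ Finset.univ.erase i, B i j = ∑ j, B i j :=
        Finset.add_sum_erase Finset.univ (fun j => B i j) (Finset.mem_univ i)
      have h2 : D i = - ∑ j ∈ Finset.univ.erase i, B i j := by
        rw [hD]; rw [← Finset.sum_neg_distrib]
      rw [h2]
      rw [hdiag i] at h
      linarith [h]
    rw [Finset.sum_congr rfl fun i _ => hrow i, Finset.sum_sub_distrib, hSB]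
    simp [hn4]
  by_cases hA : ∃ v, D v = 0
  · obtain ⟨v, hv⟩ := hA
    have hzero : ∀ j : Fin n, j ≠ v → B v j = 0 := by
      intro j hj
      have := (Finset.sum_eq_zero_iff_of_nonneg
        (fun j hj => hvnn v j (Finset.mem_erase.mp hj).1)).mp hv j
        (Finset.mem_erase.mpr ⟨hj, Finset.mem_univ j⟩)
      linarith [this]
    have : 1 < Fintype.card (Fin n) := by simp [hn4]
    obtain ⟨w, hw⟩ := Fintype.exists_ne_of_one_lt_card this v
    refine ⟨{v}, {x | x ≠ v}, ⟨v, rfl⟩, ⟨w, hw⟩, fun i => ?_, fun i => ?_, ?_⟩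
    · by_cases h : i = v
      · exact Or.inl h
      · exact Or.inr h
    · rintro ⟨h1, h2⟩
      exact h2 h1
    · rintro i (rfl : i = v) j hj
      exact hzero j hj
  · push_neg at hA
    -- every degree is 1
    have hDge1 : ∀ v, 1 ≤ D v := by
      intro v
      by_contra h
      push_neg at h
      -- D v < 1 but D v is a sum of 0/1 terms, nonzero
      have hex : ∃ j ∈ Finset.univ.erase v, - B v j ≠ 0 := by
        by_contra hno
        push_neg at hno
        exact hA v (Finset.sum_eq_zero fun j hj => hno j hj)
      obtain ⟨j, hj, hj0⟩ := hex
      have h1 : - B v j = 1 := by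
        rcases hval v j (Finset.mem_erase.mp hj).1 with h' | h'
        · exact absurd h' hj0
        · exact h'
      have : 1 ≤ D v := by
        calc (1:ℝ) = - B v j := h1.symm
          _ ≤ D v := Finset.single_le_sum
              (fun x hx => hvnn v x (Finset.mem_erase.mp hx).1) hj
      linarith
    have hD1 : ∀ v, D v = 1 := by
      have hsum0 : ∑ i, (D i - 1) = 0 := by
        rw [Finset.sum_sub_distrib, hDsum]
        simp [hn4]
      intro v
      have := (Finset.sum_eq_zero_iff_of_nonneg
        (fun i _ => by linarith [hDge1 i])).mp hsum0 v (Finset.mem_univ v)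
      linarith [this]
    -- uniqueness of neighbors
    have huniq : ∀ v j l : Fin n, j ≠ v → l ≠ v → j ≠ l →
        B v j = -1 → B v l = -1 → False := by
      intro v j l hjv hlv hjl hbj hbl
      have hsub : ({j, l} : Finset (Fin n)) ⊆ Finset.univ.erase v := by
        intro x hx
        rcases Finset.mem_insert.mp hx with rfl | hx
        · exact Finset.mem_erase.mpr ⟨hjv, Finset.mem_univ _⟩
        · rw [Finset.mem_singleton.mp hx]
          exact Finset.mem_erase.mpr ⟨hlv, Finset.mem_univ _⟩
      have h2 : (2:ℝ) ≤ D v := by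
        calc (2:ℝ) = ∑ x ∈ ({j, l} : Finset (Fin n)), (- B v x) := by
              rw [Finset.sum_pair hjl, hbj, hbl]; norm_num
          _ ≤ D v := Finset.sum_le_sum_of_subset_of_nonneg hsub
              (fun x hx _ => hvnn v x (Finset.mem_erase.mp hx).1)
      linarith [hD1 v]
    -- pick a vertex and its unique neighbor
    have hnpos : 0 < n := by omega
    set v0 : Fin n := ⟨0, hnpos⟩ with hv0
    have hex : ∃ a ∈ Finset.univ.erase v0, - B v0 a ≠ 0 := by
      by_contra hno
      push_neg at hno
      exact hA v0 (Finset.sum_eq_zero fun j hj => hno j hj)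
    obtain ⟨a, ha, ha0⟩ := hex
    have hav0 : a ≠ v0 := (Finset.mem_erase.mp ha).1
    have hBa : B v0 a = -1 := by
      rcases h01 v0 a (Ne.symm hav0) with h | h
      · exact absurd (by rw [h]; ring) ha0
      · exact h
    -- there is an element outside {v0, a}
    have hout : ∃ w : Fin n, w ≠ v0 ∧ w ≠ a := by
      by_contra hno
      push_neg at hno
      have hsub : (Finset.univ : Finset (Fin n)) ⊆ {v0, a} := by
        intro x _
        rcases Classical.em (x = v0) with h | h
        · exact Finset.mem_insert.mpr (Or.inl h)
        · exact Finset.mem_insert.mpr (Or.inr (Finset.mem_singleton.mpr (hno x h)))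
      have h5 := Finset.card_le_card hsub
      have hc2 : ({v0, a} : Finset (Fin n)).card ≤ 2 := Finset.card_insert_le _ _ |>.trans
        (by simp)
      have hcard4 : (Finset.univ : Finset (Fin n)).card = 4 := by
        rw [Finset.card_univ, Fintype.card_fin, hn4]
      rw [hcard4] at h5
      have := le_trans h5 hc2
      omega
    obtain ⟨w, hw1, hw2⟩ := hout
    refine ⟨{v0, a}, {x | x ≠ v0 ∧ x ≠ a}, ⟨v0, Or.inl rfl⟩, ⟨w, hw1, hw2⟩,
      fun i => ?_, fun i => ?_, ?_⟩
    · rcases Classical.em (i = v0) with h | h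
      · exact Or.inl (Or.inl h)
      · rcases Classical.em (i = a) with h' | h'
        · exact Or.inl (Or.inr h')
        · exact Or.inr ⟨h, h'⟩
    · rintro ⟨h1, h2⟩
      rcases h1 with h | h
      · exact h2.1 h
      · exact h2.2 h
    · rintro i hi j hj
      obtain ⟨hj1, hj2⟩ := hj
      rcases hi with h | h
      · -- i = v0
        rcases h01 i j (fun hh => hj1 (by rw [← hh, h])) with hc | hc
        · exact hc
        · exact absurd hBa (fun hb =>
            huniq v0 j a hj1 hav0 hj2 (by rw [← h]; exact hc) hb)
      · -- i = a
        have hia : i = a := h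
        rcases h01 i j (fun hh => hj2 (by rw [← hh, hia])) with hc | hc
        · exact hc
        · exfalso
          have hBav0 : B a v0 = -1 := (hsymm.apply v0 a).trans hBa
          exact huniq a j v0 hj2 (Ne.symm hav0) hj1 (by rw [← hia]; exact hc) hBav0

set_option maxHeartbeats 2000000 in
private lemma aux_three_pos {n : ℕ} (hn : 4 ≤ n) {B : Matrix (Fin n) (Fin n) ℝ}
    (hsymm : B.IsSymm) (hdiag : ∀ i, B i i = 1)
    (hoff : ∀ i j, i ≠ j → -1 ≤ B i j ∧ B i j ≤ 0)
    (hirr : B.IsIrreducibleMatrix) (hB : B.IsHermitian) :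
    3 ≤ (Finset.univ.filter fun i => 0 < hB.eigenvalues i).card := by
  classical
  by_contra hc
  push_neg at hc
  set β := hB.eigenvalues with hβ
  obtain ⟨k, hk⟩ : ∃ k : ℕ, n = k + 3 := ⟨n - 3, by omega⟩
  have hk1 : 1 ≤ k := by omega
  have : Nonempty (Fin n) := ⟨⟨0, by omega⟩⟩
  obtain ⟨i0, hi0⟩ := Finite.exists_min β
  set P := Finset.univ.filter (fun i => 0 < β i) with hP
  have hPcard : P.card ≤ 2 := by omega
  -- some index has nonpositive eigenvalue
  have hm : β i0 ≤ 0 := by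
    by_contra h
    push_neg at h
    have hall : ∀ i, 0 < β i := fun i => lt_of_lt_of_le h (hi0 i)
    have : P = Finset.univ := by
      apply Finset.eq_univ_of_forall
      intro x; simp [hP, hall x]
    rw [this, Finset.card_univ, Fintype.card_fin] at hPcard
    omega
  have hi0P : i0 ∉ P := by
    simp only [hP, Finset.mem_filter, Finset.mem_univ, true_and, not_lt]
    exact hm
  have hPsub : P ⊆ Finset.univ.erase i0 := fun x hx =>
    Finset.mem_erase.mpr ⟨fun h => hi0P (h ▸ hx), Finset.mem_univ x⟩
  have hcard' : 2 ≤ (Finset.univ.erase i0).card := by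
    rw [Finset.card_erase_of_mem (Finset.mem_univ _), Finset.card_univ, Fintype.card_fin]
    omega
  obtain ⟨T, hPT, hTsub, hTcard⟩ := Finset.exists_subsuperset_card_eq hPsub hPcard hcard'
  have hi0T : i0 ∉ T := fun h => (Finset.mem_erase.mp (hTsub h)).1 rfl
  have hTc : ∀ i, i ∉ T → β i ≤ 0 := by
    intro i hi
    by_contra h
    push_neg at h
    exact hi (hPT (by simp [hP, h]))
  -- basic quantities
  set t : ℝ := 1 - β i0 with ht
  have ht1 : 1 ≤ t := by simp [ht]; linarith
  have hsum : ∑ i, β i = (n : ℝ) := by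
    rw [← aux_trace hB]
    simp [hdiag]
  have hsumsq : ∑ i, (β i) ^ 2 = ∑ i, ∑ j, (B i j) ^ 2 := by
    rw [← aux_trace_sq hB]
    exact Finset.sum_congr rfl fun i _ => Finset.sum_congr rfl fun j _ => by
      rw [hsymm.apply j i]; ring
  -- E6 : ∑∑ (B i j)^2 + ∑∑ B i j ≤ 2n
  have hE6 : ∑ i, ∑ j, ((B i j) ^ 2 + B i j) ≤ 2 * (n : ℝ) := by
    have : ∀ i : Fin n, ∑ j, ((B i j) ^ 2 + B i j) ≤ 2 := by
      intro i
      have : ∀ j : Fin n, (B i j) ^ 2 + B i j ≤ if i = j then 2 else 0 := by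
        intro j
        by_cases h : i = j
        · norm_num [h, hdiag j]
        · simp only [h, if_false]
          obtain ⟨h1, h2⟩ := hoff i j h
          nlinarith
      calc ∑ j, ((B i j) ^ 2 + B i j) ≤ ∑ j, if i = j then (2:ℝ) else 0 :=
            Finset.sum_le_sum fun j _ => this j
        _ = 2 := by simp
    calc ∑ i, ∑ j, ((B i j) ^ 2 + B i j) ≤ ∑ i : Fin n, (2:ℝ) :=
          Finset.sum_le_sum fun i _ => this i
      _ = 2 * n := by simp [mul_comm]
  -- E7 : Rayleigh at the all-ones vector
  have hE7 : β i0 * (n : ℝ) ≤ ∑ i, ∑ j, B i j := by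
    have h1 : ((fun _ => (1:ℝ)) : Fin n → ℝ) ⬝ᵥ ((fun _ => (1:ℝ)) : Fin n → ℝ) = (n : ℝ) := by
      simp [dotProduct]
    have h2 : ((fun _ => (1:ℝ)) : Fin n → ℝ) ⬝ᵥ (B *ᵥ (fun _ => (1:ℝ))) = ∑ i, ∑ j, B i j := by
      simp [dotProduct, Matrix.mulVec]
    have := aux_rayleigh hB (fun _ => (1:ℝ)) (β i0) hi0
    rw [h1, h2] at this
    exact this
  -- sums over T and its complement
  set u : ℝ := ∑ i ∈ Tᶜ, (1 - β i) with hu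
  have hsplit : ∑ i ∈ T, (1 - β i) + ∑ i ∈ Tᶜ, (1 - β i) = ∑ i, (1 - β i) :=
    Finset.sum_add_sum_compl T _
  have htotal : ∑ i, (1 - β i) = 0 := by
    rw [Finset.sum_sub_distrib, hsum]
    simp
  have hsT : ∑ i ∈ T, (1 - β i) = -u := by
    rw [hu]; linarith [hsplit, htotal]
  have hi0Tc : i0 ∈ Tᶜ := Finset.mem_compl.mpr hi0T
  have hTccard : Tᶜ.card = k + 1 := by
    rw [Finset.card_compl, hTcard, Fintype.card_fin]
    omega
  -- E1 : u ≥ t + k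
  have hE1 : t + (k : ℝ) ≤ u := by
    rw [hu, ← Finset.sum_erase_add _ _ hi0Tc]
    have hcard2 : (Tᶜ.erase i0).card = k := by
      rw [Finset.card_erase_of_mem hi0Tc, hTccard]; omega
    have : (k : ℝ) ≤ ∑ i ∈ Tᶜ.erase i0, (1 - β i) := by
      calc (k : ℝ) = (Tᶜ.erase i0).card • (1:ℝ) := by rw [hcard2]; simp
        _ ≤ ∑ i ∈ Tᶜ.erase i0, (1 - β i) := by
            apply Finset.card_nsmul_le_sum
            intro x hx
            have hxT : x ∉ T := Finset.mem_compl.mp (Finset.mem_of_mem_erase hx)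
            linarith [hTc x hxT]
    rw [← ht]
    linarith
  -- E2 : squares on the complement
  have hE2 : t ^ 2 + (k : ℝ) ≤ ∑ i ∈ Tᶜ, (1 - β i) ^ 2 := by
    rw [← Finset.sum_erase_add _ _ hi0Tc]
    have hcard2 : (Tᶜ.erase i0).card = k := by
      rw [Finset.card_erase_of_mem hi0Tc, hTccard]; omega
    have : (k : ℝ) ≤ ∑ i ∈ Tᶜ.erase i0, (1 - β i) ^ 2 := by
      calc (k : ℝ) = (Tᶜ.erase i0).card • (1:ℝ) := by rw [hcard2]; simp
        _ ≤ ∑ i ∈ Tᶜ.erase i0, (1 - β i) ^ 2 := by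
            apply Finset.card_nsmul_le_sum
            intro x hx
            have hxT : x ∉ T := Finset.mem_compl.mp (Finset.mem_of_mem_erase hx)
            nlinarith [hTc x hxT]
    rw [← ht]
    linarith
  -- E3 : squares on T
  have hE3 : u ^ 2 / 2 ≤ ∑ i ∈ T, (1 - β i) ^ 2 := by
    obtain ⟨a, b, hab, hTab⟩ := Finset.card_eq_two.mp hTcard
    rw [hTab, Finset.sum_pair hab]
    rw [hTab, Finset.sum_pair hab] at hsT
    nlinarith [sq_nonneg ((1 - β a) - (1 - β b)), hsT]
  -- Q
  set Q : ℝ := ∑ i, (1 - β i) ^ 2 with hQ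
  have hQsplit : Q = ∑ i ∈ T, (1 - β i) ^ 2 + ∑ i ∈ Tᶜ, (1 - β i) ^ 2 :=
    (Finset.sum_add_sum_compl T _).symm
  have hQlow : u ^ 2 / 2 + t ^ 2 + (k : ℝ) ≤ Q := by
    rw [hQsplit]
    have := add_le_add hE3 hE2
    linarith [this]
  have hQid : Q = ∑ i, ∑ j, (B i j) ^ 2 - (n : ℝ) := by
    have hone : ∑ _i : Fin n, (1:ℝ) = (n:ℝ) := by simp
    have e1 : ∑ i, (1 - β i) ^ 2 + 2 * ∑ i, β i = ∑ i, (β i) ^ 2 + ∑ _i : Fin n, (1:ℝ) := by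
      rw [Finset.mul_sum, ← Finset.sum_add_distrib, ← Finset.sum_add_distrib]
      exact Finset.sum_congr rfl fun i _ => by ring
    rw [hsum, hone, hsumsq] at e1
    rw [hQ]
    linarith
  have hQhigh : Q ≤ (n : ℝ) * t := by
    have h1 : ∑ i, ∑ j, (B i j) ^ 2 + ∑ i, ∑ j, B i j ≤ 2 * (n:ℝ) := by
      calc ∑ i, ∑ j, (B i j)^2 + ∑ i, ∑ j, B i j
          = ∑ i, (∑ j, (B i j)^2 + ∑ j, B i j) := (Finset.sum_add_distrib).symm
        _ = ∑ i, ∑ j, ((B i j)^2 + B i j) :=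
            Finset.sum_congr rfl fun i _ => (Finset.sum_add_distrib).symm
        _ ≤ 2 * n := hE6
    have h2 : (1 - t) * (n : ℝ) ≤ ∑ i, ∑ j, B i j := by
      calc (1 - t) * (n:ℝ) = β i0 * n := by rw [ht]; ring
        _ ≤ ∑ i, ∑ j, B i j := hE7
    rw [hQid]
    nlinarith [h1, h2]
  -- the final contradiction
  have hn' : (n : ℝ) = (k : ℝ) + 3 := by rw [hk]; push_cast; ring
  have hu2 : (t + (k:ℝ)) ^ 2 ≤ u ^ 2 := by
    have hknn : (0:ℝ) ≤ t + (k:ℝ) := by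
      have := Nat.cast_nonneg (α := ℝ) k
      linarith
    exact pow_le_pow_left₀ hknn hE1 2
  by_cases hk2 : 2 ≤ k
  · have hk2' : (2 : ℝ) ≤ (k : ℝ) := by exact_mod_cast hk2
    nlinarith [hQlow, hQhigh, hu2, ht1, hk2', sq_nonneg (t - 1)]
  · -- k = 1, n = 4
    have hkeq : k = 1 := by omega
    have hneq : n = 4 := by omega
    have hk1' : (k : ℝ) = 1 := by rw [hkeq]; norm_num
    have hn4 : (n : ℝ) = 4 := by rw [hneq]; norm_num
    rw [hk1'] at hu2 hQlow
    rw [hn'] at hQhigh hQid hE7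
    rw [hk1'] at hQhigh hQid hE7
    -- t = 1
    have ht0 : t = 1 := by nlinarith [hQlow, hQhigh, hu2, ht1, sq_nonneg (t - 1)]
    have hSBge : (0:ℝ) ≤ ∑ i, ∑ j, B i j := by
      have : β i0 = 0 := by rw [ht] at ht0; linarith
      rw [this] at hE7; linarith
    have hE6' : ∑ i, ∑ j, (B i j) ^ 2 + ∑ i, ∑ j, B i j ≤ 8 := by
      have h1 : ∑ i, (∑ j, (B i j)^2 + ∑ j, B i j) = ∑ i, ∑ j, ((B i j)^2 + B i j) :=
        Finset.sum_congr rfl fun i _ => (Finset.sum_add_distrib).symm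
      rw [← Finset.sum_add_distrib, h1]
      calc ∑ i, ∑ j, ((B i j)^2 + B i j) ≤ 2 * (n:ℝ) := hE6
        _ = 8 := by rw [hn4]; norm_num
    have hQ4 : Q = 4 := by
      have hlow : (4:ℝ) ≤ Q := by nlinarith [hQlow, hu2, ht0]
      have hhigh : Q ≤ 4 := by
        rw [hQid]
        linarith [hE6', hSBge]
      linarith
    have hSQ : ∑ i, ∑ j, (B i j) ^ 2 = 8 := by
      rw [hQid] at hQ4; linarith
    have hSB0 : ∑ i, ∑ j, B i j = 0 := by
      have := hE6'
      linarith [hSBge]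
    -- termwise equality in E6
    have hterm : ∀ i j : Fin n, i ≠ j → (B i j) ^ 2 + B i j = 0 := by
      have hsum0 : ∑ i, ∑ j, ((if i = j then (2:ℝ) else 0) - ((B i j)^2 + B i j)) = 0 := by
        have h2 : ∑ i : Fin n, ∑ j : Fin n, (if i = j then (2:ℝ) else 0) = 8 := by
          have : ∀ i : Fin n, ∑ j : Fin n, (if i = j then (2:ℝ) else 0) = 2 := by
            intro i; simp
          rw [Finset.sum_congr rfl fun i _ => this i, Finset.sum_const, Finset.card_univ,
            Fintype.card_fin, hneq]
          norm_num
        have h3 : ∑ i, ∑ j, ((B i j)^2 + B i j) = 8 := by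
          have h1 : ∑ i, (∑ j, (B i j)^2 + ∑ j, B i j) = ∑ i, ∑ j, ((B i j)^2 + B i j) :=
            Finset.sum_congr rfl fun i _ => (Finset.sum_add_distrib).symm
          rw [← h1, Finset.sum_add_distrib, hSQ, hSB0]
          norm_num
        have h4 : ∀ i : Fin n, ∑ j, ((if i = j then (2:ℝ) else 0) - ((B i j)^2 + B i j))
            = (∑ j, (if i = j then (2:ℝ) else 0)) - ∑ j, ((B i j)^2 + B i j) :=
          fun i => Finset.sum_sub_distrib _ _
        rw [Finset.sum_congr rfl fun i _ => h4 i, Finset.sum_sub_distrib, h2, h3]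
        norm_num
      have hnn : ∀ i j : Fin n, 0 ≤ (if i = j then (2:ℝ) else 0) - ((B i j)^2 + B i j) := by
        intro i j
        by_cases h : i = j
        · norm_num [h, hdiag j]
        · simp only [h, if_false]
          obtain ⟨h1, h2⟩ := hoff i j h
          nlinarith
      intro i j hij
      have houter := (Finset.sum_eq_zero_iff_of_nonneg
        (fun i _ => Finset.sum_nonneg fun j _ => hnn i j)).mp hsum0 i (Finset.mem_univ i)
      have hinner := (Finset.sum_eq_zero_iff_of_nonneg
        (fun j _ => hnn i j)).mp houter j (Finset.mem_univ j)
      simp [hij] at hinner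
      linarith [hinner]
    have h01 : ∀ i j : Fin n, i ≠ j → B i j = 0 ∨ B i j = -1 := by
      intro i j hij
      have := hterm i j hij
      have : B i j * (B i j + 1) = 0 := by nlinarith [this]
      rcases mul_eq_zero.mp this with h | h
      · exact Or.inl h
      · exact Or.inr (by linarith)
    exact hirr (aux_combin hneq hsymm hdiag h01 hSB0)

private lemma aux_subtype_sum {n : ℕ} {B : Matrix (Fin n) (Fin n) ℝ} (hB : B.IsHermitian)
    (S : Finset (Fin n)) (c : {i // i ∈ S} → ℝ) :
    ∑ i : {i // i ∈ S}, c i • auxV hB i.1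
      = ∑ i ∈ S, (if h : i ∈ S then c ⟨i, h⟩ else 0) • auxV hB i := by
  rw [Finset.univ_eq_attach,
    ← Finset.sum_attach S (fun i => (if h : i ∈ S then c ⟨i, h⟩ else 0) • auxV hB i)]
  exact Finset.sum_congr rfl fun i _ => by rw [dif_pos i.2]

theorem stmt_17 (n : ℕ) (hn : 4 ≤ n) (B : Matrix (Fin n) (Fin n) ℝ) (hsymm : B.IsSymm)
    (hdiag : ∀ i, B i i = 1)
    (hoff : ∀ i j, i ≠ j → -1 ≤ B i j ∧ B i j ≤ 0)
    (hirr : B.IsIrreducibleMatrix) :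
    ∃ W : Submodule ℝ (Fin n → ℝ), Module.finrank ℝ W = 3 ∧
      ∀ x ∈ W, x ≠ 0 → 0 < x ⬝ᵥ (B *ᵥ x) := by
  classical
  have hB : B.IsHermitian := Matrix.ext fun i j => by
    simpa [Matrix.conjTranspose_apply] using hsymm.apply i j
  obtain ⟨S, hSsub, hScard⟩ :=
    Finset.exists_subset_card_eq (aux_three_pos hn hsymm hdiag hoff hirr hB)
  have hSpos : ∀ i ∈ S, 0 < hB.eigenvalues i := fun i hi =>
    (Finset.mem_filter.mp (hSsub hi)).2
  set g : {i // i ∈ S} → (Fin n → ℝ) := fun i => auxV hB i.1 with hg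
  refine ⟨Submodule.span ℝ (Set.range g), ?_, ?_⟩
  · -- the span has dimension 3
    have hli : LinearIndependent ℝ g := by
      rw [Fintype.linearIndependent_iff]
      intro c hc i
      set d : Fin n → ℝ := fun i => if h : i ∈ S then c ⟨i, h⟩ else 0 with hd
      have hsum0 : ∑ i ∈ S, d i • auxV hB i = 0 := by
        rw [← aux_subtype_sum hB S c]
        exact hc
      have hz := aux_dot_sum_sum hB S d d
      rw [hsum0, zero_dotProduct] at hz
      have hall : ∀ x ∈ S, d x * d x = 0 :=
        (Finset.sum_eq_zero_iff_of_nonneg fun x _ => mul_self_nonneg (d x)).mp hz.symm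
      have : d i.1 = 0 := by
        have := hall i.1 i.2
        nlinarith [this]
      rw [hd] at this
      simpa [dif_pos i.2] using this
    rw [finrank_span_eq_card hli, Fintype.card_coe, hScard]
  · intro x hx hx0
    obtain ⟨c, hc⟩ := (Submodule.mem_span_range_iff_exists_fun ℝ).mp hx
    set d : Fin n → ℝ := fun i => if h : i ∈ S then c ⟨i, h⟩ else 0 with hd
    have hxd : x = ∑ i ∈ S, d i • auxV hB i := by
      rw [← hc, ← aux_subtype_sum hB S c]
    have hBx : x ⬝ᵥ (B *ᵥ x) = ∑ i ∈ S, d i * (hB.eigenvalues i * d i) := by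
      rw [hxd, aux_mulVec_sum hB S d,
        aux_dot_sum_sum hB S d (fun i => hB.eigenvalues i * d i)]
    have hex : ∃ j ∈ S, d j ≠ 0 := by
      by_contra h
      push_neg at h
      exact hx0 (by
        rw [hxd]
        exact Finset.sum_eq_zero fun i hi => by rw [h i hi, zero_smul])
    obtain ⟨j, hj, hdj⟩ := hex
    rw [hBx]
    apply Finset.sum_pos'
    · intro i hi
      have := le_of_lt (hSpos i hi)
      nlinarith [mul_self_nonneg (d i)]
    · refine ⟨j, hj, ?_⟩
      have h1 := hSpos j hj
      have h2 : 0 < d j * d j := by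
        rcases lt_or_gt_of_ne hdj with h | h
        · nlinarith
        · nlinarith
      nlinarith
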